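/- arXiv:1811.05394 — 4 statements merged into one kernel-verified Lean document; each statement's English description precedes it below -/
import Mathlib

section
/- Let λ_n, λ_m, λ_nm ≥ 0 be real arrival rates, let 0 ≤ r_N ≤ r_M be real red durations, and let α ∈ [0,1]. Define the joint law of the pair (N, M) of queue lengths on ℕ × ℕ by the following probabilistic program: sample four independent counts X ~ Poisson(r_N·λ_n), Y ~ Poisson(r_M·λ_m), K₁ ~ Poisson(r_N·λ_nm), K₂ ~ Poisson((r_M − r_N)·λ_nm); then, given K₁ and K₂, sample independently S₁ ~ Binomial(K₁, α) and S₂ ~ Binomial(K₂, α); and return N = X + (K₁ − S₁) and M = Y + S₁ + S₂. Then for all n, m ∈ ℕ, P(N = n, M = m) = (μ_N^n e^{−μ_N}/n!) · (μ_M^m e^{−μ_M}/m!), where μ_N := r_N·(λ_n + (1−α)·λ_nm) and μ_M := r_M·(λ_m + α·λ_nm). In particular N and M are independent Poisson random variables with means μ_N and μ_M. -/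
open ProbabilityTheory
open scoped ENNReal NNReal

open Real

lemma poi_apply (r : ℝ≥0) (n : ℕ) : poissonPMF r n = ENNReal.ofReal (poissonPMFReal r n) := rfl

lemma real_conv (x y : ℝ) (n : ℕ) :
    ∑ a ∈ Finset.range (n+1),
      (exp (-x) * x^a / a.factorial) * (exp (-y) * y^(n-a) / (n-a).factorial) =
    exp (-(x+y)) * (x+y)^n / n.factorial := by
  rw [add_pow]
  rw [Finset.mul_sum, Finset.sum_div]
  refine Finset.sum_congr rfl fun a ha => ?_
  rw [Finset.mem_range] at ha
  have hle : a ≤ n := by omega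
  have hch : (n.choose a : ℝ) * a.factorial * (n-a).factorial = n.factorial := by
    exact_mod_cast congrArg Nat.cast (Nat.choose_mul_factorial_mul_factorial hle)
  have h1 : (a.factorial : ℝ) ≠ 0 := Nat.cast_ne_zero.mpr (Nat.factorial_ne_zero a)
  have h2 : ((n-a).factorial : ℝ) ≠ 0 := Nat.cast_ne_zero.mpr (Nat.factorial_ne_zero (n-a))
  have h3 : (n.factorial : ℝ) ≠ 0 := Nat.cast_ne_zero.mpr (Nat.factorial_ne_zero n)
  have he : exp (-(x+y)) = exp (-x) * exp (-y) := by rw [← Real.exp_add]; ring_nf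
  rw [he]
  field_simp
  linear_combination (-(x^a * y^(n-a))) * hch

lemma real_split (α μ : ℝ) (hα0 : 0 ≤ α) (hα1 : α ≤ 1) (a b : ℕ) :
    (exp (-μ) * μ^(a+b) / (a+b).factorial) * (α^b * (1-α)^a * ((a+b).choose b)) =
    (exp (-((1-α)*μ)) * ((1-α)*μ)^a / a.factorial) *
      (exp (-(α*μ)) * (α*μ)^b / b.factorial) := by
  have hch : (((a+b).choose b : ℝ)) * b.factorial * a.factorial = (a+b).factorial := by
    have := Nat.choose_mul_factorial_mul_factorial (Nat.le_add_left b a)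
    have h2 : a + b - b = a := by omega
    rw [h2] at this
    exact_mod_cast congrArg Nat.cast this
  have he : exp (-((1-α)*μ)) * exp (-(α*μ)) = exp (-μ) := by
    rw [← Real.exp_add]; ring_nf
  have h1 : (a.factorial : ℝ) ≠ 0 := Nat.cast_ne_zero.mpr (Nat.factorial_ne_zero a)
  have h2 : (b.factorial : ℝ) ≠ 0 := Nat.cast_ne_zero.mpr (Nat.factorial_ne_zero b)
  have h3 : ((a+b).factorial : ℝ) ≠ 0 := Nat.cast_ne_zero.mpr (Nat.factorial_ne_zero (a+b))
  rw [mul_pow, mul_pow, ← he]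
  field_simp
  linear_combination (α^b * (1-α)^a * μ^a * μ^b) * hch

lemma bind_pure_prod_apply (p q : PMF ℕ) (a b : ℕ) :
    ((p.bind fun x => q.bind fun y => PMF.pure ((x, y) : ℕ × ℕ))) (a, b) = p a * q b := by
  simp only [PMF.bind_apply, PMF.pure_apply]
  rw [tsum_eq_single a ?h1]
  · congr 1
    rw [tsum_eq_single b ?h2]
    · simp
    · intro y hy
      rw [if_neg (by simp [Prod.ext_iff]; tauto), mul_zero]
  · intro x hx
    convert mul_zero _
    convert tsum_zero with y
    rw [if_neg (by simp [Prod.ext_iff]; tauto), mul_zero]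

lemma poi_conv (μ1 μ2 : ℝ≥0) :
    ((poissonPMF μ1).bind fun a => (poissonPMF μ2).bind fun b => PMF.pure (a + b)) =
      poissonPMF (μ1 + μ2) := by
  ext n
  simp only [PMF.bind_apply]
  have hinner : ∀ a : ℕ, (∑' b : ℕ, poissonPMF μ2 b * (PMF.pure (a + b) : PMF ℕ) n) =
      if a ≤ n then poissonPMF μ2 (n - a) else 0 := by
    intro a
    simp only [PMF.pure_apply]
    by_cases h : a ≤ n
    · rw [if_pos h, tsum_eq_single (n - a)]
      · rw [if_pos (by omega), mul_one]
      · intro b hb; rw [if_neg (by omega), mul_zero]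
    · rw [if_neg h]
      convert tsum_zero with b
      rw [if_neg (by omega), mul_zero]
  simp only [hinner]
  rw [tsum_eq_sum (s := Finset.range (n+1))
    (by intro a ha; rw [if_neg (by simp at ha; omega), mul_zero])]
  have hterm : ∀ a ∈ Finset.range (n+1),
      poissonPMF μ1 a * (if a ≤ n then poissonPMF μ2 (n-a) else 0)
      = ENNReal.ofReal (poissonPMFReal μ1 a * poissonPMFReal μ2 (n-a)) := by
    intro a ha
    rw [if_pos (by simp at ha; omega), poi_apply, poi_apply,
      ← ENNReal.ofReal_mul poissonPMFReal_nonneg]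
  rw [Finset.sum_congr rfl hterm,
    ← ENNReal.ofReal_sum_of_nonneg
      (fun a _ => mul_nonneg poissonPMFReal_nonneg poissonPMFReal_nonneg),
    poi_apply]
  congr 1
  unfold poissonPMFReal
  push_cast
  exact real_conv μ1 μ2 n
lemma poi_split (α : ℝ≥0) (hα : α ≤ 1) (hα' : (α:ℝ≥0∞) ≤ 1) (μ : ℝ≥0) :
    ((poissonPMF μ).bind fun k => (PMF.binomial α hα k).bind fun s =>
        PMF.pure ((k - s.val, s.val) : ℕ × ℕ)) =
      (poissonPMF ((1-α)*μ)).bind fun a =>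
        (poissonPMF (α*μ)).bind fun b => PMF.pure ((a, b) : ℕ × ℕ) := by
  ext ⟨a, b⟩
  rw [bind_pure_prod_apply]
  simp only [PMF.bind_apply]
  rw [tsum_eq_single (a+b) ?hk]
  case hk =>
    intro k hk
    convert mul_zero _
    convert tsum_zero with s
    have hs := s.isLt
    rw [PMF.pure_apply, if_neg, mul_zero]
    intro h
    rw [Prod.ext_iff] at h
    simp only at h
    omega
  rw [tsum_eq_single (⟨b, by omega⟩ : Fin (a+b+1)) ?hs]
  case hs =>
    intro s hsne
    rw [PMF.pure_apply, if_neg, mul_zero]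
    intro h
    rw [Prod.ext_iff] at h
    simp only at h
    exact hsne (Fin.ext h.2.symm)
  rw [PMF.pure_apply, if_pos (by rw [Prod.ext_iff]; simp), mul_one]
  rw [PMF.binomial_apply]
  simp only [Fin.val_mk, Fin.val_last, Nat.add_sub_cancel]
  have hcoe : (1 - (α:ℝ≥0∞)) = ((1-α : ℝ≥0) : ℝ≥0∞) := by
    rw [ENNReal.coe_sub, ENNReal.coe_one]
  rw [hcoe]
  simp only [poi_apply, ← ENNReal.ofReal_coe_nnreal, ← ENNReal.ofReal_natCast]
  rw [← ENNReal.ofReal_pow α.coe_nonneg, ← ENNReal.ofReal_pow (1-α).coe_nonneg,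
    ← ENNReal.ofReal_mul (by positivity), ← ENNReal.ofReal_mul (by positivity),
    ← ENNReal.ofReal_mul poissonPMFReal_nonneg, ← ENNReal.ofReal_mul poissonPMFReal_nonneg]
  congr 1
  unfold poissonPMFReal
  push_cast [NNReal.coe_sub hα]
  exact real_split (α:ℝ) (μ:ℝ) α.coe_nonneg (by exact_mod_cast hα) a b

lemma bind_congr' {α β : Type*} (p : PMF α) {f g : α → PMF β} (h : ∀ a, f a = g a) :
    p.bind f = p.bind g := congrArg _ (funext h)

lemma poi_split_bind {γ : Type*} (α : ℝ≥0) (hα : α ≤ 1) (hα' : (α:ℝ≥0∞) ≤ 1) (μ : ℝ≥0)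
    (f : ℕ → ℕ → PMF γ) :
    ((poissonPMF μ).bind fun k => (PMF.binomial α hα k).bind fun s =>
        f (k - s.val) s.val) =
      (poissonPMF ((1-α)*μ)).bind fun a => (poissonPMF (α*μ)).bind fun b => f a b := by
  have h := congrArg (fun P : PMF (ℕ × ℕ) => P.bind fun p => f p.1 p.2)
    (poi_split α hα hα' μ)
  simpa only [PMF.bind_bind, PMF.pure_bind] using h

lemma poi_conv_bind {γ : Type*} (μ1 μ2 : ℝ≥0) (f : ℕ → PMF γ) :
    ((poissonPMF μ1).bind fun a => (poissonPMF μ2).bind fun b => f (a + b)) =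
      (poissonPMF (μ1 + μ2)).bind f := by
  have h := congrArg (fun P : PMF ℕ => P.bind f) (poi_conv μ1 μ2)
  simpa only [PMF.bind_bind, PMF.pure_bind] using h


/-- Joint law of the two queue lengths `(N, M)` on a two-lane link: sample independent Poisson
counts `X ~ Poisson(r_N λ_n)`, `Y ~ Poisson(r_M λ_m)`, `K₁ ~ Poisson(r_N λ_nm)`,
`K₂ ~ Poisson((r_M − r_N) λ_nm)`, then `S₁ ~ Binomial(K₁, α)` and `S₂ ~ Binomial(K₂, α)`, and
return `N = X + (K₁ − S₁)`, `M = Y + S₁ + S₂`.  Then `(N, M)` are independent Poisson random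
variables with means `μ_N = r_N (λ_n + (1−α) λ_nm)` and `μ_M = r_M (λ_m + α λ_nm)`:
`P(N = n, M = m) = (μ_N^n e^{−μ_N}/n!) ⬝ (μ_M^m e^{−μ_M}/m!)`. -/
theorem two_lane_queue_lengths_joint_poisson
    (lam_n lam_m lam_nm : ℝ≥0) (rN rM : ℝ≥0) (hr : rN ≤ rM)
    (α : ℝ≥0) (hα : α ≤ 1) (n m : ℕ) :
    (((poissonPMF (rN * lam_n)).bind fun x =>
        (poissonPMF (rM * lam_m)).bind fun y =>
          (poissonPMF (rN * lam_nm)).bind fun k1 =>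
            (poissonPMF ((rM - rN) * lam_nm)).bind fun k2 =>
              (PMF.binomial α (by exact_mod_cast hα) k1).bind fun s1 =>
                (PMF.binomial α (by exact_mod_cast hα) k2).bind fun s2 =>
                  PMF.pure (x + (k1 - s1.val), y + s1.val + s2.val)) (n, m)) =
      ENNReal.ofReal
        ((((rN : ℝ) * ((lam_n : ℝ) + (1 - (α : ℝ)) * (lam_nm : ℝ))) ^ n *
            Real.exp (-((rN : ℝ) * ((lam_n : ℝ) + (1 - (α : ℝ)) * (lam_nm : ℝ)))) /
              n.factorial) *
          (((rM : ℝ) * ((lam_m : ℝ) + (α : ℝ) * (lam_nm : ℝ))) ^ m *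
            Real.exp (-((rM : ℝ) * ((lam_m : ℝ) + (α : ℝ) * (lam_nm : ℝ)))) /
              m.factorial)) := by
  have hα' : (α:ℝ≥0∞) ≤ 1 := by exact_mod_cast hα
  have hN : rN*lam_n + (1-α)*(rN*lam_nm) = rN*(lam_n + (1-α)*lam_nm) := by ring
  have hM : rM*lam_m + (α*(rN*lam_nm) + α*((rM-rN)*lam_nm)) = rM*(lam_m + α*lam_nm) := by
    have h1 : α*(rN*lam_nm) + α*((rM-rN)*lam_nm) = α*(rM*lam_nm) := by
      rw [← mul_add, ← add_mul, add_tsub_cancel_of_le hr]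
    rw [h1]; ring
  have key : ((poissonPMF (rN * lam_n)).bind fun x =>
        (poissonPMF (rM * lam_m)).bind fun y =>
          (poissonPMF (rN * lam_nm)).bind fun k1 =>
            (poissonPMF ((rM - rN) * lam_nm)).bind fun k2 =>
              (PMF.binomial α hα k1).bind fun s1 =>
                (PMF.binomial α hα k2).bind fun s2 =>
                  PMF.pure (x + (k1 - s1.val), y + s1.val + s2.val)) =
      (poissonPMF (rN*(lam_n + (1-α)*lam_nm))).bind fun v =>
        (poissonPMF (rM*(lam_m + α*lam_nm))).bind fun u =>
          PMF.pure ((v, u) : ℕ × ℕ) := by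
    calc _ = (poissonPMF (rN * lam_n)).bind fun x =>
        (poissonPMF (rM * lam_m)).bind fun y =>
          (poissonPMF (rN * lam_nm)).bind fun k1 =>
            (PMF.binomial α hα k1).bind fun s1 =>
              (poissonPMF ((rM - rN) * lam_nm)).bind fun k2 =>
                (PMF.binomial α hα k2).bind fun s2 =>
                  PMF.pure (x + (k1 - s1.val), y + s1.val + s2.val) := by
            refine bind_congr' _ fun x => bind_congr' _ fun y => bind_congr' _ fun k1 => ?_
            exact PMF.bind_comm _ _ _
      _ = (poissonPMF (rN * lam_n)).bind fun x =>
        (poissonPMF (rM * lam_m)).bind fun y =>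
          (poissonPMF ((1-α)*(rN * lam_nm))).bind fun a1 =>
            (poissonPMF (α*(rN * lam_nm))).bind fun s1 =>
              (poissonPMF ((rM - rN) * lam_nm)).bind fun k2 =>
                (PMF.binomial α hα k2).bind fun s2 =>
                  PMF.pure (x + a1, y + s1 + s2.val) := by
            refine bind_congr' _ fun x => bind_congr' _ fun y => ?_
            exact poi_split_bind α hα hα' (rN * lam_nm) (fun a s =>
              (poissonPMF ((rM - rN) * lam_nm)).bind fun k2 =>
                (PMF.binomial α hα k2).bind fun s2 =>
                  PMF.pure (x + a, y + s + s2.val))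
      _ = (poissonPMF (rN * lam_n)).bind fun x =>
        (poissonPMF (rM * lam_m)).bind fun y =>
          (poissonPMF ((1-α)*(rN * lam_nm))).bind fun a1 =>
            (poissonPMF (α*(rN * lam_nm))).bind fun s1 =>
              (poissonPMF ((1-α)*((rM - rN) * lam_nm))).bind fun _ =>
                (poissonPMF (α*((rM - rN) * lam_nm))).bind fun s2 =>
                  PMF.pure (x + a1, y + s1 + s2) := by
            refine bind_congr' _ fun x => bind_congr' _ fun y =>
              bind_congr' _ fun a1 => bind_congr' _ fun s1 => ?_
            exact poi_split_bind α hα hα' ((rM - rN) * lam_nm) (fun _ s =>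
              PMF.pure (x + a1, y + s1 + s))
      _ = (poissonPMF (rN * lam_n)).bind fun x =>
        (poissonPMF (rM * lam_m)).bind fun y =>
          (poissonPMF ((1-α)*(rN * lam_nm))).bind fun a1 =>
            (poissonPMF (α*(rN * lam_nm))).bind fun s1 =>
              (poissonPMF (α*((rM - rN) * lam_nm))).bind fun s2 =>
                PMF.pure (x + a1, y + s1 + s2) := by
            refine bind_congr' _ fun x => bind_congr' _ fun y =>
              bind_congr' _ fun a1 => bind_congr' _ fun s1 => ?_
            exact PMF.bind_const _ _
      _ = (poissonPMF (rN * lam_n)).bind fun x =>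
          (poissonPMF ((1-α)*(rN * lam_nm))).bind fun a1 =>
            (poissonPMF (rM * lam_m)).bind fun y =>
              (poissonPMF (α*(rN * lam_nm))).bind fun s1 =>
                (poissonPMF (α*((rM - rN) * lam_nm))).bind fun s2 =>
                  PMF.pure (x + a1, y + (s1 + s2)) := by
            refine bind_congr' _ fun x => ?_
            rw [PMF.bind_comm]
            refine bind_congr' _ fun a1 => bind_congr' _ fun y =>
              bind_congr' _ fun s1 => bind_congr' _ fun s2 => ?_
            rw [add_assoc]
      _ = (poissonPMF (rN*lam_n + (1-α)*(rN * lam_nm))).bind fun v =>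
            (poissonPMF (rM * lam_m)).bind fun y =>
              (poissonPMF (α*(rN * lam_nm))).bind fun s1 =>
                (poissonPMF (α*((rM - rN) * lam_nm))).bind fun s2 =>
                  PMF.pure (v, y + (s1 + s2)) := by
            exact poi_conv_bind _ _ (fun v =>
              (poissonPMF (rM * lam_m)).bind fun y =>
                (poissonPMF (α*(rN * lam_nm))).bind fun s1 =>
                  (poissonPMF (α*((rM - rN) * lam_nm))).bind fun s2 =>
                    PMF.pure (v, y + (s1 + s2)))
      _ = (poissonPMF (rN*lam_n + (1-α)*(rN * lam_nm))).bind fun v =>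
            (poissonPMF (rM * lam_m)).bind fun y =>
              (poissonPMF (α*(rN * lam_nm) + α*((rM - rN) * lam_nm))).bind fun t =>
                  PMF.pure (v, y + t) := by
            refine bind_congr' _ fun v => bind_congr' _ fun y => ?_
            exact poi_conv_bind _ _ (fun t => PMF.pure ((v, y + t) : ℕ × ℕ))
      _ = (poissonPMF (rN*lam_n + (1-α)*(rN * lam_nm))).bind fun v =>
            (poissonPMF (rM*lam_m + (α*(rN * lam_nm) + α*((rM - rN) * lam_nm)))).bind fun u =>
                  PMF.pure (v, u) := by
            refine bind_congr' _ fun v => ?_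
            exact poi_conv_bind _ _ (fun u => PMF.pure ((v, u) : ℕ × ℕ))
      _ = _ := by rw [hN, hM]
  rw [key, bind_pure_prod_apply, poi_apply, poi_apply,
    ← ENNReal.ofReal_mul poissonPMFReal_nonneg]
  congr 1
  unfold poissonPMFReal
  push_cast [NNReal.coe_sub hα]
  ring
end

section
/- Fix an integer n ≥ 2 and p ∈ (0,1). Let ℙ be the product measure on Ω = {0,1}^n in which the n coordinates are independent Bernoulli(p) random variables. For ω ∈ Ω define C(ω) := number of indices i with ω_i = 1 and L(ω) := the largest index i with ω_i = 1 (L(ω) := 0 if none). Then for every integer l with 2 ≤ l ≤ n, ∑_{c=1}^{l} ((c−1)/(l−1)) · ℙ(C = c and L = l) = p · ℙ(L = l). Equivalently, conditional on the event {L = l} with l ≥ 2, the estimator p̂ := (C−1)/(L−1) satisfies E[p̂ | L = l] = p, i.e., the estimator p̂ = (c_p − 1)/(l_p − 1) of the penetration ratio is unbiased. -/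
open MeasureTheory
open scoped ENNReal

lemma singleton_meas (n : ℕ) (q : NNReal) (hq : q ≤ 1) (ω : Fin n → Bool) :
    (Measure.pi fun _ : Fin n => (PMF.bernoulli q hq).toMeasure) {ω}
      = (q : ℝ≥0∞) ^ (Finset.univ.filter fun i => ω i = true).card
        * (1 - (q : ℝ≥0∞)) ^ (n - (Finset.univ.filter fun i => ω i = true).card) := by
  classical
  have h1 : ({ω} : Set (Fin n → Bool)) = Set.pi Set.univ (fun i => {ω i}) := by
    simp [Set.univ_pi_singleton]
  rw [h1, Measure.pi_pi]
  have h2 : ∀ b : Bool, (PMF.bernoulli q hq).toMeasure {b} = cond b (q : ℝ≥0∞) (1 - q) := by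
    intro b
    rw [PMF.toMeasure_apply_singleton _ _ (measurableSet_singleton b), PMF.bernoulli_apply]
    cases b <;> simp [ENNReal.coe_sub]
  simp_rw [h2]
  have h3 : ∀ i : Fin n, cond (ω i) (q : ℝ≥0∞) (1-q) = if ω i = true then (q : ℝ≥0∞) else 1 - q := by
    intro i; cases ω i <;> rfl
  simp_rw [h3]
  rw [Finset.prod_ite, Finset.prod_const, Finset.prod_const]
  congr 1
  have := Finset.card_filter_add_card_filter_not
    (s := (Finset.univ : Finset (Fin n))) (p := fun i => ω i = true)
  simp only [Finset.card_univ, Fintype.card_fin, Bool.not_eq_true] at this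
  simp only [Bool.not_eq_true]
  congr 1
  omega

lemma meas_as_sum {α : Type*} [Fintype α] [MeasurableSpace α] [MeasurableSingletonClass α]
    (μ : Measure α) (s : Set α) [DecidablePred (· ∈ s)] :
    μ s = ∑ x ∈ Finset.univ.filter (· ∈ s), μ {x} := by
  rw [← Measure.tsum_indicator_apply_singleton μ s (Set.Finite.measurableSet (Set.toFinite s))]
  rw [tsum_fintype]
  rw [Finset.sum_filter]
  congr 1
  ext x
  by_cases h : x ∈ s <;> simp [h, Set.indicator_apply]

lemma count_lemma (n l c : ℕ) (hc : 1 ≤ c) (hl : 2 ≤ l) (hln : l ≤ n) :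
    (Finset.univ.filter fun ω : Fin n → Bool =>
       (Finset.univ.filter fun i => ω i = true).card = c ∧
       (Finset.univ.filter fun i => ω i = true).sup (fun i => i.val + 1) = l).card
    = (l-1).choose (c-1) := by
  classical
  have hl1 : l - 1 < n := by omega
  set i₀ : Fin n := ⟨l - 1, hl1⟩ with hi₀
  set T : Finset (Fin n) := Finset.Iio i₀ with hT
  have hTcard : T.card = l - 1 := Fin.card_Iio i₀
  rw [← hTcard, ← Finset.card_powersetCard]
  -- membership facts
  have key : ∀ ω : Fin n → Bool,
      (Finset.univ.filter fun i => ω i = true).card = c ∧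
      (Finset.univ.filter fun i => ω i = true).sup (fun i => i.val + 1) = l →
      i₀ ∈ (Finset.univ.filter fun i => ω i = true) := by
    intro ω ⟨hc', hL⟩
    have hne : (Finset.univ.filter fun i => ω i = true).Nonempty := by
      rw [← Finset.card_pos]; omega
    obtain ⟨i, hi, hsup⟩ := Finset.exists_mem_eq_sup _ hne (fun i : Fin n => i.val + 1)
    have : i = i₀ := by
      apply Fin.ext
      have : i.val + 1 = l := by rw [← hL, hsup]
      simp [hi₀]; omega
    rwa [← this]
  apply Finset.card_nbij' (fun ω => (Finset.univ.filter fun i => ω i = true).erase i₀)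
      (fun s => fun i => decide (i ∈ insert i₀ s))
  · intro ω hω
    simp only [Finset.mem_coe, Finset.mem_filter, Finset.mem_univ, true_and] at hω
    have hmem := key ω hω
    obtain ⟨hc', hL⟩ := hω
    rw [Finset.mem_coe, Finset.mem_powersetCard]
    constructor
    · intro j hj
      rw [Finset.mem_erase] at hj
      obtain ⟨hj1, hj2⟩ := hj
      have hle : j.val + 1 ≤ l := by
        rw [← hL]; exact Finset.le_sup (f := fun i : Fin n => i.val + 1) hj2
      have : j.val ≠ l - 1 := fun h => hj1 (Fin.ext h)
      rw [hT, Finset.mem_Iio]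
      exact Fin.lt_def.mpr (by simp [hi₀]; omega)
    · rw [Finset.card_erase_of_mem hmem, hc']
  · intro s hs
    rw [Finset.mem_coe, Finset.mem_powersetCard] at hs
    obtain ⟨hsub, hcard⟩ := hs
    have hi₀s : i₀ ∉ s := fun h => by
      have := hsub h; rw [hT, Finset.mem_Iio] at this; exact lt_irrefl _ this
    have hfil : (Finset.univ.filter fun i => (decide (i ∈ insert i₀ s) : Bool) = true)
        = insert i₀ s := by
      ext i; simp
    simp only [Finset.mem_coe, Finset.mem_filter, Finset.mem_univ, true_and]
    rw [hfil]
    constructor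
    · rw [Finset.card_insert_of_notMem hi₀s, hcard]; omega
    · apply le_antisymm
      · apply Finset.sup_le
        intro j hj
        rw [Finset.mem_insert] at hj
        rcases hj with h | h
        · simp [h, hi₀]; omega
        · have := hsub h; rw [hT, Finset.mem_Iio, Fin.lt_def] at this
          simp only [hi₀] at this; omega
      · calc l = i₀.val + 1 := by simp [hi₀]; omega
          _ ≤ _ := Finset.le_sup (f := fun i : Fin n => i.val + 1) (Finset.mem_insert_self i₀ s)
  · intro ω hω
    simp only [Finset.mem_coe, Finset.mem_filter, Finset.mem_univ, true_and] at hω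
    have hmem := key ω hω
    funext i
    beta_reduce
    rw [Finset.insert_erase hmem]
    simp
  · intro s hs
    rw [Finset.mem_coe, Finset.mem_powersetCard] at hs
    have hi₀s : i₀ ∉ s := fun h => by
      have := hs.1 h; rw [hT, Finset.mem_Iio] at this; exact lt_irrefl _ this
    have hfil : (Finset.univ.filter fun i => (decide (i ∈ insert i₀ s) : Bool) = true)
        = insert i₀ s := by
      ext i; simp
    beta_reduce
    rw [hfil, Finset.erase_insert hi₀s]

lemma binom_one (p : ℝ) (m : ℕ) :
    ∑ k ∈ Finset.range (m+1), ((m.choose k : ℝ)) * (p^k * (1-p)^(m-k)) = 1 := by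
  have h : ∑ k ∈ Finset.range (m+1), ((m.choose k : ℝ)) * (p^k * (1-p)^(m-k))
      = (p + (1-p))^m := by
    rw [add_pow]
    exact Finset.sum_congr rfl (fun k _ => by ring)
  rw [h]
  norm_num

lemma binom_mean (p : ℝ) (m : ℕ) (hm : 1 ≤ m) :
    ∑ k ∈ Finset.range (m+1), (k:ℝ) * (m.choose k : ℝ) * (p^k * (1-p)^(m-k))
      = m * p := by
  obtain ⟨m', rfl⟩ : ∃ m', m = m' + 1 := ⟨m-1, by omega⟩
  rw [Finset.sum_range_succ']
  simp only [Nat.cast_zero, zero_mul, add_zero]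
  push_cast
  calc ∑ j ∈ Finset.range (m'+1),
        ((j:ℝ)+1) * (((m'+1).choose (j+1) : ℝ)) * (p^(j+1) * (1-p)^(m'-j))
      = ∑ j ∈ Finset.range (m'+1),
        ((m':ℝ)+1) * p * ((m'.choose j : ℝ) * (p^j * (1-p)^(m'-j))) := by
        apply Finset.sum_congr rfl
        intro j hj
        have h1 := congrArg (Nat.cast : ℕ → ℝ) (Nat.add_one_mul_choose_eq m' j)
        push_cast at h1
        rw [pow_succ]
        linear_combination (p^j * p * (1-p)^(m'-j)) * h1.symm
    _ = ((m':ℝ)+1) * p := by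
        rw [← Finset.mul_sum, binom_one p m']
        ring

lemma sum_Icc_shift (l : ℕ) (f : ℕ → ℝ) :
    ∑ c ∈ Finset.Icc 1 l, f c = ∑ k ∈ Finset.range l, f (k+1) := by
  have : Finset.Icc 1 l = Finset.Ico 1 (l+1) := by
    rw [Finset.Ico_add_one_right_eq_Icc]
  rw [this, Finset.sum_Ico_eq_sum_range]
  simp [Nat.add_comm]

lemma real_key (p : ℝ) (n l : ℕ) (hl : 2 ≤ l) (hln : l ≤ n) :
    ∑ c ∈ Finset.Icc 1 l,
        (((c:ℝ)-1)/((l:ℝ)-1)) * (((l-1).choose (c-1) : ℝ) * (p^c * (1-p)^(n-c)))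
      = p * ∑ c ∈ Finset.Icc 1 l, (((l-1).choose (c-1) : ℝ) * (p^c * (1-p)^(n-c))) := by
  obtain ⟨m, rfl⟩ : ∃ m, l = m + 1 := ⟨l-1, by omega⟩
  have hm : 1 ≤ m := by omega
  have hmR : ((m:ℝ)) ≠ 0 := Nat.cast_ne_zero.mpr (by omega)
  rw [sum_Icc_shift, sum_Icc_shift]
  simp only [Nat.add_sub_cancel]
  push_cast
  have hpow : ∀ k ∈ Finset.range (m+1),
      (1-p)^(n-(k+1)) = (1-p)^(m-k) * (1-p)^(n-(m+1)) := by
    intro k hk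
    rw [Finset.mem_range] at hk
    rw [← pow_add]
    congr 1
    omega
  have hL : ∑ k ∈ Finset.range (m+1),
        (((k:ℝ)+1-1)/((m:ℝ)+1-1)) * ((m.choose k : ℝ) * (p^(k+1) * (1-p)^(n-(k+1))))
      = (p * (1-p)^(n-(m+1)) / (m:ℝ)) *
        ∑ k ∈ Finset.range (m+1), (k:ℝ) * (m.choose k : ℝ) * (p^k * (1-p)^(m-k)) := by
    rw [Finset.mul_sum]
    apply Finset.sum_congr rfl
    intro k hk
    rw [hpow k hk, pow_succ]
    simp only [add_sub_cancel_right]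
    field_simp
  have hR : ∑ k ∈ Finset.range (m+1),
        ((m.choose k : ℝ) * (p^(k+1) * (1-p)^(n-(k+1))))
      = (p * (1-p)^(n-(m+1))) *
        ∑ k ∈ Finset.range (m+1), ((m.choose k : ℝ) * (p^k * (1-p)^(m-k))) := by
    rw [Finset.mul_sum]
    apply Finset.sum_congr rfl
    intro k hk
    rw [hpow k hk, pow_succ]
    ring
  rw [hL, hR, binom_mean p m hm, binom_one p m]
  field_simp

lemma main_aux (n : ℕ) (hn : 2 ≤ n) (p : ℝ) (hp0 : 0 < p) (hp1 : p < 1)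
    (l : ℕ) (hl : 2 ≤ l) (hln : l ≤ n) :
    ∑ c ∈ Finset.Icc 1 l,
        (((c : ℝ) - 1) / ((l : ℝ) - 1)) *
          ((Measure.pi fun _ : Fin n =>
            (PMF.bernoulli (Real.toNNReal p) (Real.toNNReal_le_one.mpr hp1.le)).toMeasure)
            {ω | (Finset.univ.filter fun i => ω i = true).card = c ∧
                 (Finset.univ.filter fun i => ω i = true).sup (fun i => i.val + 1) = l}).toReal =
      p * ((Measure.pi fun _ : Fin n =>
            (PMF.bernoulli (Real.toNNReal p) (Real.toNNReal_le_one.mpr hp1.le)).toMeasure)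
            {ω | (Finset.univ.filter fun i => ω i = true).sup (fun i => i.val + 1) = l}).toReal := by
  classical
  set q : ℝ≥0∞ := ENNReal.ofReal p with hqdef
  set P : Measure (Fin n → Bool) := Measure.pi fun _ : Fin n =>
      (PMF.bernoulli (Real.toNNReal p) (Real.toNNReal_le_one.mpr hp1.le)).toMeasure with hP
  have hq1 : q ≤ 1 := ENNReal.ofReal_le_one.mpr hp1.le
  have hsing : ∀ ω : Fin n → Bool,
      P {ω} = q ^ (Finset.univ.filter fun i => ω i = true).card
        * (1 - q) ^ (n - (Finset.univ.filter fun i => ω i = true).card) :=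
    singleton_meas n (Real.toNNReal p) (Real.toNNReal_le_one.mpr hp1.le)
  -- measure of the joint event
  have key1 : ∀ c ∈ Finset.Icc 1 l,
      P {ω | (Finset.univ.filter fun i => ω i = true).card = c ∧
             (Finset.univ.filter fun i => ω i = true).sup (fun i => i.val + 1) = l}
      = ((l-1).choose (c-1) : ℝ≥0∞) * (q^c * (1-q)^(n-c)) := by
    intro c hc
    rw [Finset.mem_Icc] at hc
    rw [meas_as_sum]
    have hfil : (Finset.univ.filter
          (· ∈ {ω : Fin n → Bool | (Finset.univ.filter fun i => ω i = true).card = c ∧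
             (Finset.univ.filter fun i => ω i = true).sup (fun i => i.val + 1) = l}))
        = Finset.univ.filter (fun ω : Fin n → Bool =>
            (Finset.univ.filter fun i => ω i = true).card = c ∧
            (Finset.univ.filter fun i => ω i = true).sup (fun i => i.val + 1) = l) := by
      ext ω; simp
    rw [hfil]
    have hconst : ∀ ω ∈ Finset.univ.filter (fun ω : Fin n → Bool =>
            (Finset.univ.filter fun i => ω i = true).card = c ∧
            (Finset.univ.filter fun i => ω i = true).sup (fun i => i.val + 1) = l),
        P {ω} = q^c * (1-q)^(n-c) := by
      intro ω hω
      rw [Finset.mem_filter] at hω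
      rw [hsing ω, hω.2.1]
    rw [Finset.sum_congr rfl hconst, Finset.sum_const,
      count_lemma n l c hc.1 hl hln]
    simp [nsmul_eq_mul]
  -- partition of the event {L = l}
  have key2 : P {ω | (Finset.univ.filter fun i => ω i = true).sup (fun i => i.val + 1) = l}
      = ∑ c ∈ Finset.Icc 1 l,
          P {ω | (Finset.univ.filter fun i => ω i = true).card = c ∧
             (Finset.univ.filter fun i => ω i = true).sup (fun i => i.val + 1) = l} := by
    rw [meas_as_sum]
    have hfil : (Finset.univ.filter
          (· ∈ {ω : Fin n → Bool |
            (Finset.univ.filter fun i => ω i = true).sup (fun i => i.val + 1) = l}))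
        = Finset.univ.filter (fun ω : Fin n → Bool =>
            (Finset.univ.filter fun i => ω i = true).sup (fun i => i.val + 1) = l) := by
      ext ω; simp
    rw [hfil]
    have hmaps : ∀ ω ∈ Finset.univ.filter (fun ω : Fin n → Bool =>
            (Finset.univ.filter fun i => ω i = true).sup (fun i => i.val + 1) = l),
        (Finset.univ.filter fun i => ω i = true).card ∈ Finset.Icc 1 l := by
      intro ω hω
      rw [Finset.mem_filter] at hω
      rw [Finset.mem_Icc]
      constructor
      · by_contra h
        have h0 : (Finset.univ.filter fun i => ω i = true).card = 0 := by omega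
        rw [Finset.card_eq_zero] at h0
        rw [h0] at hω
        simp at hω
        omega
      · have : ∀ i ∈ (Finset.univ.filter fun i => ω i = true), i.val ∈ Finset.range l := by
          intro i hi
          rw [Finset.mem_range]
          have h2 : i.val + 1 ≤ l := by
            simpa [hω.2] using Finset.le_sup (f := fun i : Fin n => i.val + 1) hi
          omega
        have := Finset.card_le_card_of_injOn (fun i : Fin n => i.val) (fun i hi => this i hi)
          (fun a _ b _ h => Fin.ext h)
        simpa using this
    rw [← Finset.sum_fiberwise_of_maps_to hmaps (fun ω => P {ω})]
    apply Finset.sum_congr rfl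
    intro c hc
    rw [meas_as_sum]
    apply Finset.sum_congr _ (fun _ _ => rfl)
    ext ω
    simp only [Finset.mem_filter, Finset.mem_univ, true_and, Set.mem_setOf_eq]
    tauto
  -- pass to reals
  have hne : ∀ c ∈ Finset.Icc 1 l,
      ((l-1).choose (c-1) : ℝ≥0∞) * (q^c * (1-q)^(n-c)) ≠ ⊤ := by
    intro c _
    apply ENNReal.mul_ne_top (ENNReal.natCast_ne_top _)
    apply ENNReal.mul_ne_top (ENNReal.pow_ne_top (by simp [hqdef]))
    exact ENNReal.pow_ne_top (by simp [ENNReal.sub_ne_top])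
  have h1q : (1 : ℝ≥0∞) - q = ENNReal.ofReal (1 - p) := by
    rw [ENNReal.ofReal_sub 1 hp0.le, ENNReal.ofReal_one]
  have htr : ∀ c ∈ Finset.Icc 1 l,
      (((l-1).choose (c-1) : ℝ≥0∞) * (q^c * (1-q)^(n-c))).toReal
      = ((l-1).choose (c-1) : ℝ) * (p^c * (1-p)^(n-c)) := by
    intro c _
    rw [h1q, hqdef]
    simp [ENNReal.toReal_mul, ENNReal.toReal_pow, ENNReal.toReal_ofReal hp0.le,
      ENNReal.toReal_ofReal (by linarith : (0:ℝ) ≤ 1 - p)]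
  calc ∑ c ∈ Finset.Icc 1 l, (((c : ℝ) - 1) / ((l : ℝ) - 1)) *
          (P {ω | (Finset.univ.filter fun i => ω i = true).card = c ∧
             (Finset.univ.filter fun i => ω i = true).sup (fun i => i.val + 1) = l}).toReal
      = ∑ c ∈ Finset.Icc 1 l, (((c : ℝ) - 1) / ((l : ℝ) - 1)) *
          (((l-1).choose (c-1) : ℝ) * (p^c * (1-p)^(n-c))) := by
        apply Finset.sum_congr rfl
        intro c hc
        rw [key1 c hc, htr c hc]
    _ = p * ∑ c ∈ Finset.Icc 1 l, (((l-1).choose (c-1) : ℝ) * (p^c * (1-p)^(n-c))) :=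
        real_key p n l hl hln
    _ = _ := by
        rw [key2, ENNReal.toReal_sum (fun c hc => key1 c hc ▸ hne c hc)]
        congr 1
        apply Finset.sum_congr rfl
        intro c hc
        rw [key1 c hc, htr c hc]

/-- Unbiasedness of the one-lane penetration-ratio estimator `p̂ = (C−1)/(L−1)`: a queue of
`n ≥ 2` vehicles, each independently a probe with probability `p`; `C ω` is the number of
probes and `L ω` the position of the last probe (`0` if none).  For every `2 ≤ l ≤ n`,
`∑_{c=1}^{l} ((c−1)/(l−1)) · ℙ(C = c ∧ L = l) = p · ℙ(L = l)`, i.e.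
`E[(C−1)/(L−1) | L = l] = p`. -/
theorem penetration_estimator_unbiased (n : ℕ) (hn : 2 ≤ n) (p : ℝ)
    (hp0 : 0 < p) (hp1 : p < 1) (l : ℕ) (hl : 2 ≤ l) (hln : l ≤ n) :
    let ℙ : Measure (Fin n → Bool) :=
      Measure.pi fun _ : Fin n =>
        (PMF.bernoulli (Real.toNNReal p) (Real.toNNReal_le_one.mpr hp1.le)).toMeasure
    let C : (Fin n → Bool) → ℕ := fun ω => (Finset.univ.filter fun i => ω i = true).card
    let L : (Fin n → Bool) → ℕ := fun ω =>
      (Finset.univ.filter fun i => ω i = true).sup fun i => i.val + 1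
    ∑ c ∈ Finset.Icc 1 l,
        (((c : ℝ) - 1) / ((l : ℝ) - 1)) * (ℙ {ω | C ω = c ∧ L ω = l}).toReal =
      p * (ℙ {ω | L ω = l}).toReal := by
  exact main_aux n hn p hp0 hp1 l hl hln
end

section
/- Let l_n > 0, l_nm > 0, l_m ≥ 0 be reals and let r̄ > 0. For α ∈ [0,1] define f(α, r̄) := |r̄·(l_n + (1−α)·l_nm) − (l_m + α·l_nm)| / (r̄·(l_n + (1−α)·l_nm)), and define α*(r̄) := max(0, min(1, (r̄·l_n + r̄·l_nm − l_m)/(l_nm·(r̄ + 1)))). Then α*(r̄) ∈ [0,1] and for every α ∈ [0,1], f(α*(r̄), r̄) ≤ f(α, r̄); that is, α*(r̄) minimizes f(·, r̄) over [0,1]. -/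
/-- The clamped assignment ratio
`α*(r̄) = max(0, min(1, (r̄ l_n + r̄ l_nm − l_m)/(l_nm (r̄ + 1))))` lies in `[0,1]` and
minimizes the relative queue imbalance `f(·, r̄)` over `[0,1]`. -/
theorem alphastar_minimizes_imbalance (ln lm lnm r : ℝ) (hln : 0 < ln) (hlnm : 0 < lnm)
    (hlm : 0 ≤ lm) (hr : 0 < r) :
    let f : ℝ → ℝ := fun α =>
      |r * (ln + (1 - α) * lnm) - (lm + α * lnm)| / (r * (ln + (1 - α) * lnm))
    let αstar : ℝ := max 0 (min 1 ((r * ln + r * lnm - lm) / (lnm * (r + 1))))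
    (0 ≤ αstar ∧ αstar ≤ 1) ∧ ∀ α : ℝ, 0 ≤ α → α ≤ 1 → f αstar ≤ f α := by
  intro f αstar
  have hden : (0:ℝ) < lnm * (r + 1) := by positivity
  set β : ℝ := (r * ln + r * lnm - lm) / (lnm * (r + 1)) with hβ
  have hβval : β * (lnm * (r + 1)) = r * ln + r * lnm - lm :=
    div_mul_cancel₀ _ hden.ne'
  have hD : ∀ α : ℝ, α ≤ 1 → 0 < r * (ln + (1 - α) * lnm) := by
    intro α hα
    have h1 : 0 ≤ (1 - α) * lnm := mul_nonneg (by linarith) hlnm.le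
    nlinarith [mul_pos hr hln]
  have hαstar0 : 0 ≤ αstar := le_max_left _ _
  have hαstar1 : αstar ≤ 1 := max_le zero_le_one (min_le_left _ _)
  refine ⟨⟨hαstar0, hαstar1⟩, ?_⟩
  intro α hα0 hα1
  have hDα := hD α hα1
  rcases lt_or_ge β 0 with hb | hb
  · -- αstar = 0
    have hst : αstar = 0 := by
      have h1 : min 1 β = β := min_eq_right (by linarith)
      simp only [αstar, ← hβ, h1, max_eq_left hb.le]
    have hN : r * ln + r * lnm - lm < 0 := by
      have := mul_neg_of_neg_of_pos hb hden
      linarith [hβval]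
    have hg0 : r * (ln + (1 - (0:ℝ)) * lnm) - (lm + 0 * lnm) < 0 := by linarith
    have hgα : r * (ln + (1 - α) * lnm) - (lm + α * lnm) < 0 := by
      nlinarith [mul_nonneg hα0 hden.le]
    have hD0 := hD 0 zero_le_one
    show f αstar ≤ f α
    rw [hst]
    simp only [f]
    rw [abs_of_neg hg0, abs_of_neg hgα, div_le_div_iff₀ hD0 hDα]
    nlinarith [mul_nonneg (mul_nonneg (mul_nonneg hα0 hr.le) hlnm.le) hlm,
      mul_nonneg (mul_nonneg (mul_nonneg hα0 hr.le) hlnm.le) hln.le,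
      mul_nonneg (mul_nonneg (mul_nonneg hα0 hr.le) hlnm.le) hlnm.le]
  · rcases le_or_gt β 1 with hb1 | hb1
    · -- αstar = β, f β = 0
      have hst : αstar = β := by
        have h1 : min 1 β = β := min_eq_right hb1
        simp only [αstar, ← hβ, h1, max_eq_right hb]
      have hgβ : r * (ln + (1 - β) * lnm) - (lm + β * lnm) = 0 := by
        nlinarith [hβval]
      show f αstar ≤ f α
      rw [hst]
      simp only [f]
      rw [hgβ, abs_zero, zero_div]
      exact div_nonneg (abs_nonneg _) hDα.le
    · -- αstar = 1
      have hst : αstar = 1 := by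
        have h1 : min 1 β = 1 := min_eq_left hb1.le
        simp only [αstar, ← hβ, h1, max_eq_right (zero_le_one)]
      have hN : lnm * (r + 1) < r * ln + r * lnm - lm := by
        have := (one_lt_div hden).mp hb1
        linarith [hβval, this]
      have hg1 : 0 < r * (ln + (1 - (1:ℝ)) * lnm) - (lm + 1 * lnm) := by
        nlinarith
      have hgα : 0 < r * (ln + (1 - α) * lnm) - (lm + α * lnm) := by
        nlinarith [mul_nonneg (sub_nonneg.2 hα1) hden.le]
      have hD1 := hD 1 le_rfl
      show f αstar ≤ f α
      rw [hst]
      simp only [f]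
      rw [abs_of_pos hg1, abs_of_pos hgα, div_le_div_iff₀ hD1 hDα]
      nlinarith [mul_nonneg (mul_nonneg (mul_nonneg (sub_nonneg.2 hα1) hr.le) hlnm.le) hlm,
        mul_nonneg (mul_nonneg (mul_nonneg (sub_nonneg.2 hα1) hr.le) hlnm.le) hln.le,
        mul_nonneg (mul_nonneg (mul_nonneg (sub_nonneg.2 hα1) hr.le) hlnm.le) hlnm.le]
end

section
/- Let p ∈ (0,1], κ ≥ 0 be reals, and let ν be a probability mass function on the positive integers (ν(0) = 0 and ∑_{l ≥ 1} ν(l) = 1). With the conditional mean m(l) := 1 + p·(l−1) + κ·(p·l + (1−p)) for l ≥ 1, one has ∑_{l ≥ 1} ν(l) · ( m(l)/(1+κ) − (1−p) ) / l = p. That is, choosing the backlog parameter i_c = 1 − p makes the two-lane penetration-ratio estimator p̂ = (c_κ − (1−p))/l_p, with c_κ = c_p/(1+κ), unbiased: E[p̂] = p regardless of the law ν of the last-probe position. -/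
/-- Choosing the backlog parameter `i_c = 1 − p` makes the two-lane penetration-ratio
estimator `p̂ = (c_κ − (1−p))/l_p` unbiased: with the conditional mean
`m(l) = 1 + p(l−1) + κ(pl + (1−p))` of the probe count given last-probe position `l`, one
has `∑_{l ≥ 1} ν(l) (m(l)/(1+κ) − (1−p))/l = p`, regardless of the law `ν` of the
last-probe position. -/
theorem estimator_unbiased_with_ic (p κ : ℝ) (hp0 : 0 < p) (hp1 : p ≤ 1) (hκ : 0 ≤ κ)
    (ν : ℕ → ℝ) (hν : ∀ l, 0 ≤ ν l) (hν0 : ν 0 = 0) (hsum : HasSum ν 1) :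
    (∑' l : ℕ,
        ν l * ((1 + p * ((l : ℝ) - 1) + κ * (p * (l : ℝ) + (1 - p))) / (1 + κ) - (1 - p)) /
          (l : ℝ)) = p := by
  have hk : (1 + κ) ≠ 0 := by positivity
  have key : ∀ l : ℕ,
      ν l * ((1 + p * ((l : ℝ) - 1) + κ * (p * (l : ℝ) + (1 - p))) / (1 + κ) - (1 - p)) /
          (l : ℝ) = ν l * p := by
    intro l
    cases l with
    | zero => simp [hν0]
    | succ n =>
      have hl : ((n : ℝ) + 1) ≠ 0 := by positivity
      have : (1 + p * (((n:ℝ)+1) - 1) + κ * (p * ((n:ℝ)+1) + (1 - p))) / (1 + κ) - (1 - p)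
          = p * ((n:ℝ)+1) := by
        field_simp
        ring
      push_cast
      rw [this]
      field_simp
  rw [tsum_congr key, (hsum.mul_right p).tsum_eq, one_mul]
end
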